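/- If (d*, b*, q*, λ*) is an energy sharing market equilibrium, then d* is an optimal solution of the centralized problem, and it is the unique optimal solution of the centralized problem. -/

import Mathlib

open Finset

variable {K : Type*} [Fintype K]

/-- `(d, b, q)` is optimal for customer `k`'s problem at price `lam`:
minimize `U k d + lam * q` subject to `q = -a*lam + b`, `w k + q = d + df k`,
and `Dlo k ≤ d ≤ Dhi k`. -/
def CustomerOpt (U : K → ℝ → ℝ) (df w Dlo Dhi : K → ℝ) (a : ℝ)
    (k : K) (lam d b q : ℝ) : Prop :=
  q = -a * lam + b ∧ w k + q = d + df k ∧ Dlo k ≤ d ∧ d ≤ Dhi k ∧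
    ∀ d' b' q' : ℝ, q' = -a * lam + b' → w k + q' = d' + df k →
      Dlo k ≤ d' → d' ≤ Dhi k → U k d + lam * q ≤ U k d' + lam * q'

/-- `lam` is optimal for the operator's problem given bids `b`:
minimize `∑ k, (lam k)^2` subject to `(fun k => -a * lam k + b k) ∈ F`. -/
def OperatorOpt (a : ℝ) (F : Set (K → ℝ)) (b lam : K → ℝ) : Prop :=
  (fun k => -a * lam k + b k) ∈ F ∧
    ∀ lam' : K → ℝ, (fun k => -a * lam' k + b k) ∈ F →
      ∑ k, (lam k) ^ 2 ≤ ∑ k, (lam' k) ^ 2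

/-- `(d, b, q, lam)` is an energy sharing market equilibrium. -/
def IsEquilibrium (U : K → ℝ → ℝ) (df w Dlo Dhi : K → ℝ) (a : ℝ)
    (F : Set (K → ℝ)) (d b q lam : K → ℝ) : Prop :=
  (∀ k, CustomerOpt U df w Dlo Dhi a k (lam k) (d k) (b k) (q k)) ∧
    OperatorOpt a F b lam

/-- Feasibility for the centralized problem. -/
def CentralFeasible (df w Dlo Dhi : K → ℝ) (F : Set (K → ℝ)) (d : K → ℝ) : Prop :=
  (∀ k, Dlo k ≤ d k ∧ d k ≤ Dhi k) ∧ (fun k => d k + df k - w k) ∈ F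

/-- The Lagrangian of the centralized problem. -/
def Lag (U : K → ℝ → ℝ) (df w : K → ℝ) (d q η : K → ℝ) : ℝ :=
  ∑ k, U k (d k) + ∑ k, η k * (d k + df k - w k - q k)

/-- `(dh, qh, ηh)` is a saddle point of the Lagrangian. -/
def IsSaddle (U : K → ℝ → ℝ) (df w Dlo Dhi : K → ℝ) (F : Set (K → ℝ))
    (dh qh ηh : K → ℝ) : Prop :=
  (∀ k, Dlo k ≤ dh k ∧ dh k ≤ Dhi k) ∧ qh ∈ F ∧
    (∀ d q : K → ℝ, (∀ k, Dlo k ≤ d k ∧ d k ≤ Dhi k) → q ∈ F →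
      Lag U df w dh qh ηh ≤ Lag U df w d q ηh) ∧
    (∀ η : K → ℝ, Lag U df w dh qh η ≤ Lag U df w dh qh ηh)

/-- Proposition 2, uniqueness part.
If `(d, b, q, lam)` is an energy sharing market equilibrium, then `d` is an optimal
solution of the centralized problem, and it is the unique optimal solution. -/
theorem equilibrium_demand_is_unique_central_optimum
    (U : K → ℝ → ℝ) (df w Dlo Dhi : K → ℝ) (a : ℝ) (F : Set (K → ℝ))
    (hU : ∀ k, StrictConvexOn ℝ Set.univ (U k))
    (hUcont : ∀ k, Continuous (U k))
    (ha : 0 < a)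
    (hFne : F.Nonempty) (hFclosed : IsClosed F) (hFconvex : Convex ℝ F)
    (hD : ∀ k, Dlo k ≤ Dhi k)
    (d b q lam : K → ℝ)
    (heq : IsEquilibrium U df w Dlo Dhi a F d b q lam) :
    (CentralFeasible df w Dlo Dhi F d ∧
      ∀ d' : K → ℝ, CentralFeasible df w Dlo Dhi F d' →
        ∑ k, U k (d k) ≤ ∑ k, U k (d' k)) ∧
    (∀ d' : K → ℝ,
      (CentralFeasible df w Dlo Dhi F d' ∧
        ∀ d'' : K → ℝ, CentralFeasible df w Dlo Dhi F d'' →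
          ∑ k, U k (d' k) ≤ ∑ k, U k (d'' k)) → d' = d) := by

  obtain ⟨hcust, hopF, hopmin⟩ := heq
  have hq_eq : ∀ k, q k = -a * lam k + b k := fun k => (hcust k).1
  have hbal : ∀ k, w k + q k = d k + df k := fun k => (hcust k).2.1
  have hlo : ∀ k, Dlo k ≤ d k := fun k => (hcust k).2.2.1
  have hhi : ∀ k, d k ≤ Dhi k := fun k => (hcust k).2.2.2.1
  have hmin := fun k => (hcust k).2.2.2.2
  have hqF : q ∈ F := by
    have h : (fun k => -a * lam k + b k) = q := funext fun k => (hq_eq k).symm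
    rw [← h]; exact hopF
  have hlam_eq : ∀ k, lam k = (b k - q k) / a := by
    intro k; rw [eq_div_iff ha.ne']; have := hq_eq k; linarith
  -- projection inequality
  have hproj : ∀ q' ∈ F, ∑ k, lam k * (q' k - q k) ≤ 0 := by
    intro q' hq'
    set S := ∑ k, (b k - q k) * (q' k - q k) with hS
    set T := ∑ k, (q' k - q k) ^ 2 with hT
    have hTnn : (0:ℝ) ≤ T := Finset.sum_nonneg fun k _ => sq_nonneg _
    have key : ∀ t : ℝ, 0 < t → t ≤ 1 → 2 * S ≤ t * T := by
      intro t ht0 ht1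
      set qt : K → ℝ := fun k => (1 - t) * q k + t * q' k with hqt
      have hqtF : qt ∈ F := by
        have hc := hFconvex hqF hq' (show (0:ℝ) ≤ 1 - t by linarith)
          (show (0:ℝ) ≤ t from ht0.le) (show (1 - t) + t = 1 by ring)
        have he : (1 - t) • q + t • q' = qt := by
          funext k
          simp only [Pi.add_apply, Pi.smul_apply, smul_eq_mul, hqt]
        rw [← he]; exact hc
      have hmem : (fun k => -a * ((b k - qt k) / a) + b k) ∈ F := by
        have he : (fun k => -a * ((b k - qt k) / a) + b k) = qt := by
          funext k; field_simp; ring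
        rw [he]; exact hqtF
      have hsq := hopmin _ hmem
      have h0 : ∑ k, (lam k) ^ 2 = (∑ k, (b k - q k) ^ 2) / a ^ 2 := by
        rw [Finset.sum_div]
        exact Finset.sum_congr rfl fun k _ => by rw [hlam_eq k, div_pow]
      have h1 : ∑ k, ((b k - qt k) / a) ^ 2 = (∑ k, (b k - qt k) ^ 2) / a ^ 2 := by
        rw [Finset.sum_div]
        exact Finset.sum_congr rfl fun k _ => div_pow _ _ _
      rw [h0, h1, div_le_div_iff_of_pos_right (pow_pos ha 2)] at hsq
      have hexp : ∑ k, (b k - qt k) ^ 2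
          = ∑ k, (b k - q k) ^ 2 - 2 * t * S + t ^ 2 * T := by
        rw [hS, hT, Finset.mul_sum, Finset.mul_sum, ← Finset.sum_sub_distrib,
          ← Finset.sum_add_distrib]
        exact Finset.sum_congr rfl fun k _ => by simp only [hqt]; ring
      rw [hexp] at hsq
      have h2tS : 2 * t * S ≤ t ^ 2 * T := by linarith
      have := (mul_le_mul_iff_right₀ ht0).mpr (le_refl (1:ℝ))
      nlinarith [h2tS, ht0]
    have hSle : S ≤ 0 := by
      by_contra h
      push_neg at h
      set t := min 1 (S / (T + 1)) with ht
      have ht0 : 0 < t := lt_min one_pos (div_pos h (by linarith))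
      have ht1 : t ≤ 1 := min_le_left _ _
      have hk := key t ht0 ht1
      have htS : t ≤ S / (T + 1) := min_le_right _ _
      have hmul : t * (T + 1) ≤ S := (le_div_iff₀ (by linarith)).mp htS
      have he : t * T = t * (T + 1) - t := by ring
      linarith
    have he : ∑ k, lam k * (q' k - q k) = S / a := by
      rw [hS, Finset.sum_div]
      exact Finset.sum_congr rfl fun k _ => by rw [hlam_eq k]; ring
    rw [he]
    exact div_nonpos_of_nonpos_of_nonneg hSle ha.le
  have hfeasd : CentralFeasible df w Dlo Dhi F d := by
    refine ⟨fun k => ⟨hlo k, hhi k⟩, ?_⟩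
    have h : (fun k => d k + df k - w k) = q := funext fun k => by
      have := hbal k; linarith
    rw [h]; exact hqF
  have hopt : ∀ d' : K → ℝ, CentralFeasible df w Dlo Dhi F d' →
      ∑ k, U k (d k) ≤ ∑ k, U k (d' k) := by
    rintro d' ⟨hbnd, hmem⟩
    set q' : K → ℝ := fun k => d' k + df k - w k with hq'def
    have hq'F : q' ∈ F := hmem
    have hck : ∀ k, U k (d k) + lam k * q k ≤ U k (d' k) + lam k * q' k := by
      intro k
      exact hmin k (d' k) (q' k + a * lam k) (q' k) (by ring)
        (by simp only [hq'def]; ring) (hbnd k).1 (hbnd k).2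
    have hsum : ∑ k, (U k (d k) + lam k * q k)
        ≤ ∑ k, (U k (d' k) + lam k * q' k) :=
      Finset.sum_le_sum fun k _ => hck k
    have hp := hproj q' hq'F
    have e1 : ∑ k, lam k * (q' k - q k)
        = ∑ k, lam k * q' k - ∑ k, lam k * q k := by
      rw [← Finset.sum_sub_distrib]
      exact Finset.sum_congr rfl fun k _ => by ring
    rw [Finset.sum_add_distrib, Finset.sum_add_distrib] at hsum
    linarith
  refine ⟨⟨hfeasd, hopt⟩, ?_⟩
  rintro d' ⟨hfeas', hopt'⟩
  by_contra hne
  have hne' : ∃ k, d' k ≠ d k := by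
    by_contra h; push_neg at h; exact hne (funext h)
  obtain ⟨k0, hk0⟩ := hne'
  have heqU : ∑ k, U k (d' k) = ∑ k, U k (d k) :=
    le_antisymm (hopt' d hfeasd) (hopt d' hfeas')
  set m : K → ℝ := fun k => d k / 2 + d' k / 2 with hm
  have hmfeas : CentralFeasible df w Dlo Dhi F m := by
    constructor
    · intro k
      have h1 := hfeasd.1 k
      have h2 := hfeas'.1 k
      have he : m k = d k / 2 + d' k / 2 := by simp only [hm]
      exact ⟨by rw [he]; linarith [h1.1, h2.1], by rw [he]; linarith [h1.2, h2.2]⟩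
    · have hc := hFconvex hfeasd.2 hfeas'.2 (by norm_num : (0:ℝ) ≤ 1/2)
        (by norm_num : (0:ℝ) ≤ 1/2) (by norm_num)
      have he : (fun k => m k + df k - w k)
          = (1/2:ℝ) • (fun k => d k + df k - w k)
            + (1/2:ℝ) • (fun k => d' k + df k - w k) := by
        funext k
        simp only [Pi.add_apply, Pi.smul_apply, smul_eq_mul, hm]
        ring
      rw [he]; exact hc
  have hle : ∀ k, U k (m k) ≤ U k (d k) / 2 + U k (d' k) / 2 := by
    intro k
    have h := (hU k).convexOn.2 (Set.mem_univ (d k)) (Set.mem_univ (d' k))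
      (by norm_num : (0:ℝ) ≤ 1/2) (by norm_num : (0:ℝ) ≤ 1/2) (by norm_num)
    have e : (1/2:ℝ) • d k + (1/2:ℝ) • d' k = m k := by
      simp only [smul_eq_mul, hm]; ring
    rw [e] at h
    simp only [smul_eq_mul] at h
    linarith
  have hlt0 : U k0 (m k0) < U k0 (d k0) / 2 + U k0 (d' k0) / 2 := by
    have h := (hU k0).2 (Set.mem_univ (d k0)) (Set.mem_univ (d' k0))
      (hk0.symm) (by norm_num : (0:ℝ) < 1/2) (by norm_num : (0:ℝ) < 1/2)
      (by norm_num)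
    have e : (1/2:ℝ) • d k0 + (1/2:ℝ) • d' k0 = m k0 := by
      simp only [smul_eq_mul, hm]; ring
    rw [e] at h
    simp only [smul_eq_mul] at h
    linarith
  have hsumlt : ∑ k, U k (m k) < ∑ k, U k (d k) := by
    have h := Finset.sum_lt_sum (fun k _ => hle k)
      ⟨k0, Finset.mem_univ k0, hlt0⟩
    have e : ∑ k, (U k (d k) / 2 + U k (d' k) / 2) = ∑ k, U k (d k) := by
      rw [Finset.sum_add_distrib, ← Finset.sum_div, ← Finset.sum_div, heqU]
      ring
    linarith
  exact absurd (hopt m hmfeas) (not_le.mpr hsumlt)
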